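/- Define M(w) = (1/2) e^{-2w} (e^{2w} + 1/2)² on ℂ and S = {w = u+iv : u > (1/2)ln(1/2), 0 < v < π/2}. Then M restricted to S is injective and M(S) equals the open upper half-plane ℂ₊. -/

import Mathlib

noncomputable def fM (z : ℂ) : ℂ := z/2 + 1/2 + 1/(8*z)

lemma fM_eq (w : ℂ) : (1/2) * Complex.exp (-2*w) * (Complex.exp (2*w) + 1/2)^2
    = fM (Complex.exp (2*w)) := by
  have hz : Complex.exp (2*w) ≠ 0 := Complex.exp_ne_zero _
  have h : Complex.exp (-2*w) = (Complex.exp (2*w))⁻¹ := by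
    rw [← Complex.exp_neg]; ring_nf
  rw [h]; unfold fM; field_simp; ring

lemma fM_im (z : ℂ) (hz : z ≠ 0) :
    (fM z).im = z.im * (4 * Complex.normSq z - 1) / (8 * Complex.normSq z) := by
  have hns : Complex.normSq z ≠ 0 := (Complex.normSq_pos.2 hz).ne'
  simp [fM, Complex.div_im, Complex.normSq_mul, Complex.mul_im, Complex.mul_re]
  field_simp
  ring

lemma fM_inj {z₁ z₂ : ℂ} (h1 : z₁ ≠ 0) (h2 : z₂ ≠ 0) (hp : z₁ * z₂ ≠ 1/4)
    (h : fM z₁ = fM z₂) : z₁ = z₂ := by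
  unfold fM at h
  field_simp at h
  have key : (z₁ - z₂) * (4 * (z₁ * z₂) - 1) = 0 := by linear_combination h/2
  rcases mul_eq_zero.1 key with h' | h'
  · exact sub_eq_zero.1 h'
  · exact absurd (by linear_combination h'/4 : z₁ * z₂ = 1/4) hp

-- exp facts
lemma exp_normSq (w : ℂ) (hu : (1/2) * Real.log (1/2) < w.re) :
    1/4 < Complex.normSq (Complex.exp (2*w)) := by
  have h1 : Complex.normSq (Complex.exp (2*w)) = Real.exp (2*w.re) ^ 2 := by
    rw [← Complex.sq_norm, Complex.norm_exp]
    norm_num [Complex.mul_re]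
  rw [h1, sq, ← Real.exp_add]
  have hlog : Real.log (1/4) = 2 * Real.log (1/2) := by
    rw [show (1/4:ℝ) = (1/2)^2 by norm_num, Real.log_pow]; push_cast; ring
  have h2 : Real.log (1/4) < 2*w.re + 2*w.re := by rw [hlog]; linarith
  have h3 := Real.exp_lt_exp.2 h2
  rwa [Real.exp_log (by norm_num : (0:ℝ) < 1/4)] at h3

lemma exp_im_pos (w : ℂ) (hv1 : 0 < w.im) (hv2 : w.im < Real.pi / 2) :
    0 < (Complex.exp (2*w)).im := by
  rw [Complex.exp_im]
  have h2 : (2*w).im = 2 * w.im := by simp [Complex.mul_im]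
  rw [h2]
  exact mul_pos (Real.exp_pos _)
    (Real.sin_pos_of_pos_of_lt_pi (by linarith) (by linarith))

lemma jouk_im {z : ℂ} (hz0 : z ≠ 0) :
    (z + 1/(4*z)).im = z.im * (4 * Complex.normSq z - 1) / (4 * Complex.normSq z) := by
  have hns0 : Complex.normSq z ≠ 0 := (Complex.normSq_pos.2 hz0).ne'
  simp [Complex.add_im, Complex.div_im, Complex.normSq_mul, Complex.mul_im, Complex.mul_re]
  field_simp
  ring

lemma jouk_surj (t : ℂ) (hti : 0 < t.im) :
    ∃ z : ℂ, 1/4 < Complex.normSq z ∧ 0 < z.im ∧ z + 1/(4*z) = t := by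
  obtain ⟨d, hd⟩ : ∃ d : ℂ, d^2 = t^2 - 1 := IsAlgClosed.exists_pow_nat_eq (t^2-1) (by norm_num)
  have hab : ((t+d)/2) * ((t-d)/2) = 1/4 := by field_simp; linear_combination -4*hd
  have hsum : (t+d)/2 + (t-d)/2 = t := by ring
  have ha0 : (t+d)/2 ≠ 0 := fun h => by rw [h, zero_mul] at hab; norm_num at hab
  have hb0 : (t-d)/2 ≠ 0 := fun h => by rw [h, mul_zero] at hab; norm_num at hab
  have hnsab : Complex.normSq ((t+d)/2) * Complex.normSq ((t-d)/2) = 1/16 := by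
    rw [← Complex.normSq_mul, hab]
    norm_num [Complex.normSq]
  have main : ∀ z : ℂ, z ≠ 0 → z + 1/(4*z) = t → 1/4 < Complex.normSq z →
      ∃ z : ℂ, 1/4 < Complex.normSq z ∧ 0 < z.im ∧ z + 1/(4*z) = t := by
    intro z hz0 hzt hns
    refine ⟨z, hns, ?_, hzt⟩
    have him := jouk_im hz0
    rw [hzt] at him
    rw [him] at hti
    by_contra hle
    push_neg at hle
    have h1 : 0 < 4 * Complex.normSq z - 1 := by linarith
    have h2 : (0:ℝ) < 4 * Complex.normSq z := by linarith
    nlinarith [div_nonpos_of_nonpos_of_nonneg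
      (mul_nonpos_of_nonpos_of_nonneg hle h1.le) h2.le]
  rcases lt_trichotomy (1/4 : ℝ) (Complex.normSq ((t+d)/2)) with h | h | h
  · refine main _ ha0 ?_ h
    have : 1/(4*((t+d)/2)) = (t-d)/2 := by
      rw [div_eq_iff (by simpa using ha0 : (4:ℂ)*((t+d)/2) ≠ 0)]
      linear_combination -4*hab
    rw [this]; exact hsum
  · exfalso
    have hnsb : Complex.normSq ((t-d)/2) = 1/4 := by
      rw [← h] at hnsab; nlinarith [Complex.normSq_pos.2 ha0]
    have hval : Complex.normSq (4*((t+d)/2)) = 4 := by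
      rw [Complex.normSq_mul, ← h]; norm_num [Complex.normSq]
    have hbinv : (t-d)/2 = (4*((t+d)/2))⁻¹ := by
      exact eq_inv_of_mul_eq_one_left (by linear_combination 4*hab)
    have hbim : ((t-d)/2).im = -((t+d)/2).im := by
      rw [hbinv, Complex.inv_im, hval]
      simp [Complex.mul_im]
      ring
    have : t.im = 0 := by
      rw [← hsum, Complex.add_im, hbim]; ring
    linarith
  · refine main _ hb0 ?_ ?_
    · have : 1/(4*((t-d)/2)) = (t+d)/2 := by
        rw [div_eq_iff (by simpa using hb0 : (4:ℂ)*((t-d)/2) ≠ 0)]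
        linear_combination -4*hab
      rw [this]; linear_combination hsum
    · nlinarith [Complex.normSq_pos.2 ha0, Complex.normSq_pos.2 hb0]

lemma fM_surj {ζ : ℂ} (hζ : 0 < ζ.im) :
    ∃ z : ℂ, 1/4 < Complex.normSq z ∧ 0 < z.im ∧ fM z = ζ := by
  have hti : 0 < (2*ζ - 1).im := by
    simp [Complex.sub_im, Complex.mul_im]; linarith
  obtain ⟨z, hns, hzim, hzt⟩ := jouk_surj (2*ζ - 1) hti
  refine ⟨z, hns, hzim, ?_⟩
  have hz0 : z ≠ 0 := fun h => by rw [h] at hns; simp at hns; linarith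
  unfold fM
  have h4 : (4:ℂ)*z ≠ 0 := by simpa using hz0
  field_simp
  field_simp at hzt
  linear_combination 2*hzt

theorem stmt10 :
    Set.InjOn (fun w : ℂ => (1/2) * Complex.exp (-2 * w) * (Complex.exp (2 * w) + 1/2) ^ 2)
      {w : ℂ | (1/2) * Real.log (1/2) < w.re ∧ 0 < w.im ∧ w.im < Real.pi / 2} ∧
    (fun w : ℂ => (1/2) * Complex.exp (-2 * w) * (Complex.exp (2 * w) + 1/2) ^ 2) ''
      {w : ℂ | (1/2) * Real.log (1/2) < w.re ∧ 0 < w.im ∧ w.im < Real.pi / 2} =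
      {z : ℂ | 0 < z.im} := by
  constructor
  · intro w₁ h₁ w₂ h₂ heq
    obtain ⟨hu₁, hv₁, hv₁'⟩ := h₁
    obtain ⟨hu₂, hv₂, hv₂'⟩ := h₂
    simp only [fM_eq] at heq
    have hns₁ := exp_normSq w₁ hu₁
    have hns₂ := exp_normSq w₂ hu₂
    have hp : Complex.exp (2*w₁) * Complex.exp (2*w₂) ≠ 1/4 := by
      intro h
      have h' := congrArg Complex.normSq h
      rw [Complex.normSq_mul] at h'
      have : Complex.normSq (1/4 : ℂ) = 1/16 := by
        norm_num [Complex.normSq]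
      rw [this] at h'
      nlinarith
    have hz := fM_inj (Complex.exp_ne_zero _) (Complex.exp_ne_zero _) hp heq
    rw [Complex.exp_eq_exp_iff_exists_int] at hz
    obtain ⟨n, hn⟩ := hz
    have him := congrArg Complex.im hn
    simp only [Complex.add_im, Complex.mul_im, Complex.mul_re, Complex.I_re, Complex.I_im,
      Complex.ofReal_re, Complex.ofReal_im, Complex.intCast_re, Complex.intCast_im,
      Complex.re_ofNat, Complex.im_ofNat] at him
    have hpi := Real.pi_pos
    have hn0 : n = 0 := by
      by_contra h
      rcases lt_or_gt_of_ne h with h' | h'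
      · have hle : n ≤ -1 := by omega
        have : (n:ℝ) ≤ -1 := by exact_mod_cast hle
        nlinarith
      · have : (1:ℝ) ≤ (n:ℝ) := by exact_mod_cast h'
        nlinarith
    rw [hn0] at hn
    simp at hn
    have : (2:ℂ) * w₁ = 2 * w₂ := by rw [hn]
    exact mul_left_cancel₀ two_ne_zero this
  · ext ζ
    simp only [Set.mem_image, Set.mem_setOf_eq]
    constructor
    · rintro ⟨w, ⟨hu, hv, hv'⟩, rfl⟩
      simp only [fM_eq]
      rw [fM_im _ (Complex.exp_ne_zero _)]
      have hns := exp_normSq w hu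
      have him := exp_im_pos w hv hv'
      exact div_pos (mul_pos him (by linarith)) (by linarith)
    · intro hζ
      obtain ⟨z, hns, hzim, hfz⟩ := fM_surj hζ
      have hz0 : z ≠ 0 := fun h => by rw [h] at hzim; simp at hzim
      refine ⟨Complex.log z / 2, ⟨?_, ?_, ?_⟩, ?_⟩
      · have habs : 1/2 < ‖z‖ := by
          nlinarith [Complex.sq_norm z, norm_nonneg z]
        have : (Complex.log z / 2).re = Real.log ‖z‖ / 2 := by
          simp [Complex.div_re, Complex.log_re]
        rw [this]
        have := Real.log_lt_log (by norm_num) habs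
        linarith
      · have : (Complex.log z / 2).im = Complex.arg z / 2 := by
          simp [Complex.div_im, Complex.log_im]
        rw [this]
        have h1 : 0 ≤ Complex.arg z := Complex.arg_nonneg_iff.2 hzim.le
        have h2 : Complex.arg z ≠ 0 := fun h => by
          have := (Complex.arg_eq_zero_iff.1 h).2
          linarith
        have := lt_of_le_of_ne h1 (Ne.symm h2)
        linarith
      · have : (Complex.log z / 2).im = Complex.arg z / 2 := by
          simp [Complex.div_im, Complex.log_im]
        rw [this]
        have h1 : Complex.arg z ≤ Real.pi := Complex.arg_le_pi z
        have h2 : Complex.arg z ≠ Real.pi := fun h => by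
          have := (Complex.arg_eq_pi_iff.1 h).2
          linarith
        have := lt_of_le_of_ne h1 h2
        linarith
      · simp only [fM_eq]
        have h2 : (2:ℂ) * (Complex.log z / 2) = Complex.log z := by ring
        rw [h2, Complex.exp_log hz0]
        exact hfz
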